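/- Let R be a commutative Bezout ring of stable range 2 and let a ∈ R be a regular element. Then a is an adequate element if and only if the quotient ring R/aR is a semiregular ring, i.e. (R/aR)/J(R/aR) is von Neumann regular and idempotents lift modulo J(R/aR). -/

import Mathlib

/-- A regular element: a nonzero element that is not a zero divisor. -/
def IsRegularElem {R : Type*} [CommRing R] (a : R) : Prop :=
  a ≠ 0 ∧ ∀ x : R, a * x = 0 → x = 0

/-- Stable range 2. -/
def HasStableRange2 (R : Type*) [CommRing R] : Prop :=
  ∀ a b c : R, Ideal.span {a, b, c} = ⊤ →
    ∃ x y : R, Ideal.span {a + c * x, b + c * y} = ⊤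

/-- Stable range 1. -/
def HasStableRange1 (S : Type*) [CommRing S] : Prop :=
  ∀ a b : S, Ideal.span {a, b} = ⊤ → ∃ y : S, IsUnit (a + b * y)

/-- Inpseudo-irreducible element: any factorization is comaximal. -/
def IsInpseudoIrreducible {R : Type*} [CommRing R] (a : R) : Prop :=
  ∀ b c : R, a = b * c → Ideal.span {b, c} = ⊤

/-- Pseudo-irreducible element. -/
def IsPseudoIrreducible {R : Type*} [CommRing R] (a : R) : Prop :=
  ∀ b c : R, a = b * c → ¬IsUnit b → ¬IsUnit c → Ideal.span {b, c} ≠ ⊤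

/-- Adequate element of a Bezout ring. -/
def IsAdequateElem {R : Type*} [CommRing R] (a : R) : Prop :=
  ∀ b : R, ∃ r s : R, a = r * s ∧ Ideal.span {r, b} = ⊤ ∧
    ∀ s' : R, ¬IsUnit s' → s' ∣ s → Ideal.span {s', b} ≠ ⊤

/-- Avoidable element. -/
def IsAvoidableElem {R : Type*} [CommRing R] (a : R) : Prop :=
  ∀ b c : R, Ideal.span {a, b, c} = ⊤ →
    ∃ r s : R, a = r * s ∧ Ideal.span {r, b} = ⊤ ∧ Ideal.span {s, c} = ⊤ ∧
      Ideal.span {r, s} = ⊤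

/-- Gelfand element. -/
def IsGelfandElem {R : Type*} [CommRing R] (a : R) : Prop :=
  ∀ b c : R, Ideal.span {a, b, c} = ⊤ →
    ∃ r s : R, a = r * s ∧ Ideal.span {r, b} = ⊤ ∧ Ideal.span {s, c} = ⊤

/-- Semipotent element. -/
def IsSemipotentElem {R : Type*} [CommRing R] (a : R) : Prop :=
  ∀ b : R,
    Ideal.Quotient.mk (Ideal.span {a}) b ∉
      Ideal.jacobson (⊥ : Ideal (R ⧸ Ideal.span ({a} : Set R))) →
    ∃ r s : R, ¬IsUnit r ∧ ¬IsUnit s ∧ a = r * s ∧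
      Ideal.span {r, b} = ⊤ ∧ Ideal.span {r, s} = ⊤

/-- Gelfand ring. -/
def IsGelfandRing (S : Type*) [CommRing S] : Prop :=
  ∀ a b : S, a + b = 1 → ∃ r s : S, (1 + a * r) * (1 + b * s) = 0

/-- Clean ring: every element is a unit plus an idempotent. -/
def IsCleanRing (S : Type*) [CommRing S] : Prop :=
  ∀ a : S, ∃ u e : S, IsUnit u ∧ IsIdempotentElem e ∧ a = u + e

/-- Von Neumann regular ring. -/
def IsVNRegularRing (S : Type*) [CommRing S] : Prop :=
  ∀ a : S, ∃ x : S, a = a * x * a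

/-- Semiregular ring: S/J(S) is von Neumann regular and idempotents lift modulo J(S). -/
def IsSemiregularRing (S : Type*) [CommRing S] : Prop :=
  IsVNRegularRing (S ⧸ Ideal.jacobson (⊥ : Ideal S)) ∧
  ∀ x : S, IsIdempotentElem (Ideal.Quotient.mk (Ideal.jacobson (⊥ : Ideal S)) x) →
    ∃ e : S, IsIdempotentElem e ∧
      Ideal.Quotient.mk (Ideal.jacobson (⊥ : Ideal S)) e =
        Ideal.Quotient.mk (Ideal.jacobson (⊥ : Ideal S)) x

/-- Semipotent ring: every principal ideal not contained in the Jacobson radical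
contains a nonzero idempotent. -/
def IsSemipotentRing (S : Type*) [CommRing S] : Prop :=
  ∀ b : S, ¬(Ideal.span {b} ≤ Ideal.jacobson (⊥ : Ideal S)) →
    ∃ e : S, e ≠ 0 ∧ IsIdempotentElem e ∧ e ∈ Ideal.span ({b} : Set S)

/-- Indecomposable ring: the only idempotents are 0 and 1. -/
def IsIndecomposableRing (S : Type*) [CommRing S] : Prop :=
  ∀ e : S, IsIdempotentElem e → e = 0 ∨ e = 1

/-- Semihereditary ring: every finitely generated ideal is projective. -/
def IsSemihereditaryRing (R : Type*) [CommRing R] : Prop :=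
  ∀ I : Ideal R, I.FG → Module.Projective R I

/-- Regular range 1. -/
def HasRegularRange1 (R : Type*) [CommRing R] : Prop :=
  ∀ a b : R, Ideal.span {a, b} = ⊤ → ∃ t : R, IsRegularElem (a + b * t)

/-- Gelfand range 1. -/
def HasGelfandRange1 (R : Type*) [CommRing R] : Prop :=
  ∀ a b : R, Ideal.span {a, b} = ⊤ → ∃ t : R, IsGelfandElem (a + b * t)

/-- A rectangular matrix admits diagonal reduction with successive divisibility
of the diagonal entries. -/
def AdmitsDiagReduction {R : Type*} [CommRing R] {n m : ℕ}
    (A : Matrix (Fin n) (Fin m) R) : Prop :=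
  ∃ (P : Matrix (Fin n) (Fin n) R) (Q : Matrix (Fin m) (Fin m) R),
    IsUnit P ∧ IsUnit Q ∧
    (∀ (i : Fin n) (j : Fin m), (i : ℕ) ≠ (j : ℕ) → (P * A * Q) i j = 0) ∧
    (∀ (k : ℕ) (hn : k + 1 < n) (hm : k + 1 < m),
      (P * A * Q) ⟨k, Nat.lt_of_succ_lt hn⟩ ⟨k, Nat.lt_of_succ_lt hm⟩ ∣
        (P * A * Q) ⟨k + 1, hn⟩ ⟨k + 1, hm⟩)

/-- Elementary divisor ring: every matrix admits diagonal reduction. -/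
def IsElementaryDivisorRing (R : Type*) [CommRing R] : Prop :=
  ∀ (n m : ℕ) (A : Matrix (Fin n) (Fin m) R), AdmitsDiagReduction A



section Aux
variable {R : Type*} [CommRing R]

lemma span_pair_top_iff {x y : R} :
    Ideal.span ({x, y} : Set R) = ⊤ ↔ ∃ p q : R, p * x + q * y = 1 := by
  rw [Ideal.eq_top_iff_one, Ideal.mem_span_pair]

lemma mk_isUnit_iff {a x : R} :
    IsUnit (Ideal.Quotient.mk (Ideal.span ({a} : Set R)) x) ↔ ∃ c t : R, x * c = 1 + a * t := by
  constructor
  · intro h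
    obtain ⟨y, hy⟩ := isUnit_iff_exists_inv.mp h
    obtain ⟨c, rfl⟩ := Ideal.Quotient.mk_surjective y
    rw [← map_mul, ← map_one (Ideal.Quotient.mk (Ideal.span ({a} : Set R))),
      Ideal.Quotient.eq, Ideal.mem_span_singleton] at hy
    obtain ⟨t, ht⟩ := hy
    exact ⟨c, t, by linear_combination ht⟩
  · rintro ⟨c, t, h⟩
    refine isUnit_iff_exists_inv.mpr ⟨Ideal.Quotient.mk _ c, ?_⟩
    rw [← map_mul, ← map_one (Ideal.Quotient.mk (Ideal.span ({a} : Set R))),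
      Ideal.Quotient.eq, Ideal.mem_span_singleton]
    exact ⟨t, by linear_combination h⟩

lemma bezout_gcd [IsBezout R] (x y : R) :
    ∃ g x' y' u v : R, x = g * x' ∧ y = g * y' ∧ u * x + v * y = g := by
  obtain ⟨x', hx⟩ := IsBezout.gcd_dvd_left x y
  obtain ⟨y', hy⟩ := IsBezout.gcd_dvd_right x y
  obtain ⟨u, v, huv⟩ := IsBezout.gcd_eq_sum x y
  exact ⟨_, x', y', u, v, hx, hy, huv⟩

lemma canc_of_dvd {a g : R} (hreg : ∀ x : R, a * x = 0 → x = 0) {k : R} (hk : a = g * k) :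
    ∀ t : R, g * t = 0 → t = 0 := by
  intro t ht
  exact hreg t (by linear_combination t * hk + k * ht)

lemma comax_of_cancel {g x y x' y' u v : R} (hc : ∀ t : R, g * t = 0 → t = 0)
    (hx : x = g * x') (hy : y = g * y') (h : u * x + v * y = g) :
    u * x' + v * y' = 1 := by
  have h0 : g * (u * x' + v * y' - 1) = 0 := by linear_combination h - u * hx - v * hy
  have := hc _ h0
  linear_combination this
end Aux

lemma adequate_key {R : Type*} [CommRing R] [IsBezout R] {a : R}
    (hreg : ∀ x : R, a * x = 0 → x = 0) (had : IsAdequateElem a) (b : R) :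
    ∃ e x : R, (e * e - e) ∈ Ideal.span ({a} : Set R) ∧
      (e - b * x) ∈ Ideal.span ({a} : Set R) ∧
      Ideal.Quotient.mk (Ideal.span ({a} : Set R)) (b * (1 - e)) ∈
        Ideal.jacobson (⊥ : Ideal (R ⧸ Ideal.span ({a} : Set R))) := by
  obtain ⟨r, s, hrs, hrb, hs⟩ := had b
  obtain ⟨γ, β, hγβ⟩ := span_pair_top_iff.mp hrb
  obtain ⟨g, r1, s1, u0, v0, hgr, hgs, hguv⟩ := bezout_gcd r s
  have hgunit : IsUnit g := by
    by_contra hgu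
    exact hs g hgu ⟨s1, hgs⟩
      (span_pair_top_iff.mpr ⟨γ * r1, β, by linear_combination hγβ - γ * hgr⟩)
  obtain ⟨gi, hgi⟩ := hgunit.exists_right_inv
  have huv : (gi * u0) * r + (gi * v0) * s = 1 := by linear_combination gi * hguv + hgi
  set u := gi * u0 with hu
  set v := gi * v0 with hv
  refine ⟨v * s, β * (v * s), ?_, ?_, ?_⟩
  · exact Ideal.mem_span_singleton.mpr
      ⟨-(u * v), by linear_combination (v * s) * huv + u * v * hrs⟩
  · exact Ideal.mem_span_singleton.mpr
      ⟨γ * v, by linear_combination (-(v * s)) * hγβ - γ * v * hrs⟩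
  · rw [Ideal.mem_jacobson_bot]
    intro y
    obtain ⟨c, rfl⟩ := Ideal.Quotient.mk_surjective y
    rw [← map_mul, ← map_one (Ideal.Quotient.mk (Ideal.span ({a} : Set R))), ← map_add,
      mk_isUnit_iff]
    set w := b * (1 - v * s) * c + 1 with hw
    obtain ⟨g2, k, l, α, δ, hak, hwl, hgad⟩ := bezout_gcd a w
    obtain ⟨d, g3, r3, u1, v1, hdg, hdr, hduv⟩ := bezout_gcd g2 r
    have hdc : ∀ t : R, d * t = 0 → t = 0 :=
      canc_of_dvd hreg (k := g3 * k) (by linear_combination hak + k * hdg)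
    obtain ⟨p, q, hpq⟩ : ∃ p q : R, p * g3 + q * r3 = 1 := by
      obtain h := comax_of_cancel hdc hdg hdr hduv
      exact ⟨u1, v1, h⟩
    have h1 : g3 * k = r3 * s := by
      refine sub_eq_zero.mp (hdc _ ?_)
      linear_combination s * hdr - k * hdg - hak + hrs
    have hsg3 : s = g3 * (p * s + q * k) := by linear_combination (-s) * hpq - q * h1
    have hwg3 : w = g3 * (d * l) := by rw [hwl, hdg]; ring
    have hspan : Ideal.span ({g3, b} : Set R) = ⊤ :=
      span_pair_top_iff.mpr ⟨d * l, -((1 - v * s) * c), by linear_combination hw - hwg3⟩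
    have hg3 : IsUnit g3 := by
      by_contra h
      exact hs g3 h ⟨p * s + q * k, hsg3⟩ hspan
    obtain ⟨n, hgn⟩ := hg3.exists_right_inv
    have hd1 : d * (g3 * l - b * u * r3 * c) = 1 := by
      linear_combination hw - hwl - l * hdg - b * c * huv + b * u * c * hdr
    refine ⟨δ * ((g3 * l - b * u * r3 * c) * n), -α * ((g3 * l - b * u * r3 * c) * n), ?_⟩
    linear_combination ((g3 * l - b * u * r3 * c) * n) * hgad +
      ((g3 * l - b * u * r3 * c) * n) * hdg + (g3 * n) * hd1 + hgn

theorem stmt9 {R : Type*} [CommRing R] [IsBezout R] (hR : HasStableRange2 R)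
    (a : R) (hreg : IsRegularElem a) :
    IsAdequateElem a ↔ IsSemiregularRing (R ⧸ Ideal.span ({a} : Set R)) := by
  constructor
  · intro had
    constructor
    · -- von Neumann regularity of S/J
      intro A
      obtain ⟨B, rfl⟩ := Ideal.Quotient.mk_surjective A
      obtain ⟨b, rfl⟩ := Ideal.Quotient.mk_surjective B
      obtain ⟨e, x, hidem, hex, hJ⟩ := adequate_key hreg.2 had b
      refine ⟨Ideal.Quotient.mk _ (Ideal.Quotient.mk _ x), ?_⟩
      rw [← map_mul, ← map_mul, ← map_mul, ← map_mul, Ideal.Quotient.eq, ← map_sub]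
      have h1 : b - b * x * b = b * (1 - e) + (e - b * x) * b := by ring
      rw [h1, map_add]
      refine Ideal.add_mem _ hJ ?_
      rw [map_mul, Ideal.Quotient.eq_zero_iff_mem.mpr hex, zero_mul]
      exact Ideal.zero_mem _
    · -- idempotent lifting
      intro x0 hx0
      obtain ⟨b, rfl⟩ := Ideal.Quotient.mk_surjective x0
      obtain ⟨e, x, hidem, hex, hJ⟩ := adequate_key hreg.2 had b
      refine ⟨Ideal.Quotient.mk _ e, ?_, ?_⟩
      · show Ideal.Quotient.mk _ e * Ideal.Quotient.mk _ e = Ideal.Quotient.mk _ e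
        rw [← map_mul, Ideal.Quotient.eq]
        exact hidem
      · rw [Ideal.Quotient.eq, ← map_sub]
        have hx0' : Ideal.Quotient.mk _ (Ideal.Quotient.mk (Ideal.span ({a} : Set R)) b) *
            Ideal.Quotient.mk _ (Ideal.Quotient.mk (Ideal.span ({a} : Set R)) b) =
            Ideal.Quotient.mk _ (Ideal.Quotient.mk (Ideal.span ({a} : Set R)) b) := hx0
        rw [← map_mul, ← map_mul, Ideal.Quotient.eq, ← map_sub] at hx0'
        have h1 : e - b = -(x * (b * b - b)) + (e - b * x) * (1 - b) + -(b * (1 - e)) := by ring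
        rw [h1, map_add, map_add]
        refine Ideal.add_mem _ (Ideal.add_mem _ ?_ ?_) ?_
        · rw [map_neg, map_mul]
          exact neg_mem (Ideal.mul_mem_left _ _ hx0')
        · rw [map_mul, Ideal.Quotient.eq_zero_iff_mem.mpr hex, zero_mul]
          exact Ideal.zero_mem _
        · rw [map_neg]
          exact neg_mem hJ
  · rintro ⟨hvnr, hlift⟩ b
    set B := Ideal.Quotient.mk (Ideal.span ({a} : Set R)) b with hB
    obtain ⟨X, hX⟩ := hvnr (Ideal.Quotient.mk _ B)
    obtain ⟨x, rfl⟩ := Ideal.Quotient.mk_surjective X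
    rw [← map_mul, ← map_mul, Ideal.Quotient.eq] at hX
    have h1 : B - B * x * B ∈ Ideal.jacobson (⊥ : Ideal (R ⧸ Ideal.span ({a} : Set R))) := hX
    have hidem2 : IsIdempotentElem (Ideal.Quotient.mk
        (Ideal.jacobson (⊥ : Ideal (R ⧸ Ideal.span ({a} : Set R)))) (B * x)) := by
      show Ideal.Quotient.mk _ (B * x) * Ideal.Quotient.mk _ (B * x) =
        Ideal.Quotient.mk (Ideal.jacobson (⊥ : Ideal (R ⧸ Ideal.span ({a} : Set R)))) (B * x)
      rw [← map_mul, Ideal.Quotient.eq]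
      have h2 : B * x * (B * x) - B * x = x * (B * x * B - B) := by ring
      rw [h2]
      refine Ideal.mul_mem_left _ _ ?_
      have := neg_mem h1
      rwa [neg_sub] at this
    obtain ⟨e, he_idem, he_eq⟩ := hlift (B * x) hidem2
    have hj : e - B * x ∈ Ideal.jacobson (⊥ : Ideal (R ⧸ Ideal.span ({a} : Set R))) :=
      Ideal.Quotient.eq.mp he_eq
    have hunit : IsUnit (1 - (e - B * x)) := by
      have := Ideal.mem_jacobson_bot.mp hj (-1)
      have h3 : (e - B * x) * (-1) + 1 = 1 - (e - B * x) := by ring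
      rwa [h3] at this
    obtain ⟨cinv, hc⟩ := isUnit_iff_exists_inv.mp hunit
    have he_sq : e * e = e := he_idem
    have he2 : e = B * (e * x * cinv) := by
      linear_combination (-e) * hc - cinv * he_sq
    have hBJ : B - B * e ∈ Ideal.jacobson (⊥ : Ideal (R ⧸ Ideal.span ({a} : Set R))) := by
      have h4 : B - B * e = (B - B * x * B) + -(B * (e - B * x)) := by ring
      rw [h4]
      exact Ideal.add_mem _ h1 (neg_mem (Ideal.mul_mem_left _ _ hj))
    obtain ⟨ε, hε⟩ := Ideal.Quotient.mk_surjective e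
    obtain ⟨ζ, hζ⟩ := Ideal.Quotient.mk_surjective (e * x * cinv)
    obtain ⟨m, hm⟩ : ∃ m, ε * ε - ε = a * m := by
      have h6 : Ideal.Quotient.mk (Ideal.span ({a} : Set R)) (ε * ε) =
          Ideal.Quotient.mk (Ideal.span ({a} : Set R)) ε := by
        rw [map_mul, hε, he_sq]
      exact Ideal.mem_span_singleton.mp (Ideal.Quotient.eq.mp h6)
    obtain ⟨w2, hw2⟩ : ∃ w2, ε - b * ζ = a * w2 := by
      refine Ideal.mem_span_singleton.mp (Ideal.Quotient.eq.mp ?_)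
      rw [map_mul, hε, hζ, ← hB, ← he2]
    obtain ⟨h, s, w, α, δ, has, hεw, hhad⟩ := bezout_gcd a (1 - ε)
    have hhc : ∀ t : R, h * t = 0 → t = 0 := canc_of_dvd hreg.2 has
    have hpq : α * s + δ * w = 1 := comax_of_cancel hhc has hεw hhad
    have h5 : ε * w + s * m = 0 := by
      refine hhc _ ?_
      linear_combination (-ε) * hεw - hm - m * has
    have hεs : ε = s * (ε * α - δ * m) := by
      linear_combination (-ε) * hpq + δ * h5
    refine ⟨h, s, has, ?_, ?_⟩
    · exact span_pair_top_iff.mpr ⟨w + s * w2, ζ, by linear_combination -hεw - hw2 - w2 * has⟩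
    · intro s' hs'u hs'd hsp
      obtain ⟨k2, hk2⟩ := hs'd
      obtain ⟨α', β', hab⟩ := span_pair_top_iff.mp hsp
      have hBe : B - B * e =
          Ideal.Quotient.mk (Ideal.span ({a} : Set R)) (b - b * ε) := by
        rw [map_sub, map_mul, hε, hB]
      rw [hBe] at hBJ
      have hu := Ideal.mem_jacobson_bot.mp hBJ (Ideal.Quotient.mk _ (-β'))
      rw [← map_mul, ← map_one (Ideal.Quotient.mk (Ideal.span ({a} : Set R))), ← map_add,
        mk_isUnit_iff] at hu
      obtain ⟨c2, t, hct⟩ := hu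
      refine hs'u (IsUnit.of_mul_eq_one (a := s')
        ((k2 * (ε * α - δ * m) + α' * (1 - ε)) * c2 - h * k2 * t) ?_)
      linear_combination hct + c2 * (1 - ε) * hab - c2 * hεs -
        (c2 * (ε * α - δ * m) - t * h) * hk2 + t * has
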